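/- For every positive integer d, every integer k with 1 ≤ k < d, and S = [0,1]ᵈ \ ℚᵈ, the k-simplex set Hull_k(S) = {(A₀,...,A_k) ∈ S^{k+1} : conv{A₀,...,A_k} ⊆ S} has full measure in S^{k+1}; that is, the k-index of convexity b_k(S) equals 1. -/

import Mathlib

open MeasureTheory

open MeasureTheory Set Matrix

noncomputable def gramDet {n d : ℕ} (v : Fin n → (Fin d → ℝ)) : ℝ :=
  (Matrix.of fun i j => ∑ l, v i l * v j l).det

lemma linearIndependent_iff_gramDet {n d : ℕ} (v : Fin n → (Fin d → ℝ)) :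
    LinearIndependent ℝ v ↔ gramDet v ≠ 0 := by
  constructor
  · intro h hdet
    obtain ⟨c, hc0, hmul⟩ := Matrix.exists_mulVec_eq_zero_iff.mpr hdet
    set w : Fin d → ℝ := ∑ j, c j • v j with hw
    have hwl : ∀ l, w l = ∑ j, c j * v j l := by
      intro l; simp [hw, Finset.sum_apply]
    have key : ∑ l, w l * w l = 0 := by
      have : ∑ l, w l * w l = ∑ i, c i * ((Matrix.of fun i j => ∑ l, v i l * v j l) *ᵥ c) i := by
        simp only [Matrix.mulVec, dotProduct, Matrix.of_apply, hwl]
        calc ∑ l, (∑ j, c j * v j l) * (∑ j, c j * v j l)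
            = ∑ l, ∑ i, ∑ j, (c i * v i l) * (c j * v j l) := by
              refine Finset.sum_congr rfl fun l _ => ?_
              rw [Finset.sum_mul_sum]
          _ = ∑ i, ∑ j, ∑ l, (c i * v i l) * (c j * v j l) := by
              rw [Finset.sum_comm]
              exact Finset.sum_congr rfl fun i _ => Finset.sum_comm
          _ = ∑ i, c i * ∑ j, (∑ l, v i l * v j l) * c j := by
              refine Finset.sum_congr rfl fun i _ => ?_
              rw [Finset.mul_sum]
              refine Finset.sum_congr rfl fun j _ => ?_
              rw [Finset.sum_mul, Finset.mul_sum]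
              exact Finset.sum_congr rfl fun l _ => by ring
      rw [this, hmul]
      simp
    have hwzero : w = 0 := by
      funext l
      have := (Finset.sum_eq_zero_iff_of_nonneg
        (fun l _ => mul_self_nonneg (w l))).mp key l (Finset.mem_univ l)
      simpa [mul_self_eq_zero] using this
    obtain ⟨i, hi⟩ := Function.ne_iff.mp hc0
    exact hi ((Fintype.linearIndependent_iff.mp h c (by simpa [hw] using hwzero)) i)
  · intro hdet
    rw [Fintype.linearIndependent_iff]
    intro c hc
    by_contra hne
    push_neg at hne
    obtain ⟨i, hi⟩ := hne
    apply hdet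
    apply Matrix.exists_mulVec_eq_zero_iff.mp
    refine ⟨c, Function.ne_iff.mpr ⟨i, hi⟩, ?_⟩
    funext i'
    have hcl : ∀ l, ∑ j, c j * v j l = 0 := by
      intro l
      have := congrFun hc l
      simpa [Finset.sum_apply] using this
    simp only [Matrix.mulVec, dotProduct, Matrix.of_apply, Pi.zero_apply]
    calc ∑ j, (∑ l, v i' l * v j l) * c j
        = ∑ j, ∑ l, v i' l * v j l * c j := by simp only [Finset.sum_mul]
      _ = ∑ l, ∑ j, v i' l * v j l * c j := Finset.sum_comm
      _ = ∑ l, v i' l * ∑ j, c j * v j l := by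
          refine Finset.sum_congr rfl fun l _ => ?_
          rw [Finset.mul_sum]
          exact Finset.sum_congr rfl fun j _ => by ring
      _ = 0 := by simp [hcl]

lemma continuous_gramDet {n d : ℕ} : Continuous (gramDet (n := n) (d := d)) := by
  have hf : Continuous (fun v : Fin n → Fin d → ℝ =>
      (Matrix.of fun i j => ∑ l, v i l * v j l : Matrix (Fin n) (Fin n) ℝ)) :=
    continuous_matrix fun i j => by
      simp only [Matrix.of_apply]
      exact continuous_finset_sum _ fun l _ =>
        (((continuous_apply (A := fun _ : Fin d => ℝ) l).comp (continuous_apply i)).mul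
          ((continuous_apply (A := fun _ : Fin d => ℝ) l).comp (continuous_apply j)))
  exact hf.matrix_det

lemma measurableSet_dep {n d : ℕ} :
    MeasurableSet {v : Fin n → (Fin d → ℝ) | ¬ LinearIndependent ℝ v} := by
  have : {v : Fin n → (Fin d → ℝ) | ¬ LinearIndependent ℝ v} = gramDet ⁻¹' {0} := by
    ext v
    simp [linearIndependent_iff_gramDet, not_not]
  rw [this]
  exact continuous_gramDet.measurable (measurableSet_singleton 0)

lemma dep_null : ∀ (n d : ℕ), n ≤ d →
    volume {v : Fin n → (Fin d → ℝ) | ¬ LinearIndependent ℝ v} = 0 := by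
  intro n
  induction n with
  | zero =>
    intro d _
    have h : {v : Fin 0 → (Fin d → ℝ) | ¬ LinearIndependent ℝ v} = ∅ := by
      ext v; simp [linearIndependent_empty_type]
    simp [h]
  | succ n ih =>
    intro d hnd
    have mp := measurePreserving_piFinSuccAbove
      (fun _ : Fin (n+1) => (volume : Measure (Fin d → ℝ))) 0
    set E := Fin d → ℝ with hE
    set e := MeasurableEquiv.piFinSuccAbove (fun _ : Fin (n+1) => E) 0 with he
    have hcons : Continuous (fun z : E × (Fin n → E) => (Fin.cons z.1 z.2 : Fin (n+1) → E)) := by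
      apply continuous_pi
      intro j
      refine Fin.cases ?_ ?_ j
      · simp only [Fin.cons_zero]; exact continuous_fst
      · intro i; simp only [Fin.cons_succ]; exact (continuous_apply i).comp continuous_snd
    set S : Set (E × (Fin n → E)) := {z | ¬ LinearIndependent ℝ (Fin.cons z.1 z.2)} with hS
    set S1 : Set (E × (Fin n → E)) := {z | ¬ LinearIndependent ℝ z.2} with hS1
    set S2 : Set (E × (Fin n → E)) :=
      {z | ¬ LinearIndependent ℝ (Fin.cons z.1 z.2) ∧ LinearIndependent ℝ z.2} with hS2
    have hSm : MeasurableSet S := hcons.measurable measurableSet_dep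
    have hS1m : MeasurableSet S1 := measurable_snd measurableSet_dep
    have hS2m : MeasurableSet S2 := by
      have : S2 = S ∩ S1ᶜ := by
        ext z; simp [hS, hS1, hS2]
      rw [this]; exact hSm.inter hS1m.compl
    have hsplit : S ⊆ S1 ∪ S2 := by
      intro z hz
      by_cases h2 : LinearIndependent ℝ z.2
      · exact Or.inr ⟨hz, h2⟩
      · exact Or.inl h2
    have hS1null : (volume.prod volume) S1 = 0 := by
      have : S1 = (Set.univ : Set E) ×ˢ {B : Fin n → E | ¬ LinearIndependent ℝ B} := by
        ext z; simp [hS1, Set.mem_prod]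
      rw [this, Measure.prod_prod, ih d (Nat.le_of_succ_le hnd), mul_zero]
    -- the swapped version of S2
    set S2' : Set ((Fin n → E) × E) :=
      {w | ¬ LinearIndependent ℝ (Fin.cons w.2 w.1) ∧ LinearIndependent ℝ w.1} with hS2'
    have hcons' : Continuous (fun w : (Fin n → E) × E => (Fin.cons w.2 w.1 : Fin (n+1) → E)) := by
      apply continuous_pi
      intro j
      refine Fin.cases ?_ ?_ j
      · simp only [Fin.cons_zero]; exact continuous_snd
      · intro i; simp only [Fin.cons_succ]; exact (continuous_apply i).comp continuous_fst
    have hS2'm : MeasurableSet S2' := by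
      have : S2' = ((fun w : (Fin n → E) × E => (Fin.cons w.2 w.1 : Fin (n+1) → E)) ⁻¹'
          {v | ¬ LinearIndependent ℝ v}) ∩
          ((Prod.fst ⁻¹' {v : Fin n → E | ¬ LinearIndependent ℝ v}))ᶜ := by
        ext w; simp [hS2']
      rw [this]
      exact (hcons'.measurable measurableSet_dep).inter
        (measurable_fst measurableSet_dep).compl
    have hS2'null : (volume.prod volume) S2' = 0 := by
      rw [Measure.measure_prod_null hS2'm]
      refine Filter.Eventually.of_forall fun B => ?_
      by_cases hB : LinearIndependent ℝ B
      · have hset : Prod.mk B ⁻¹' S2' = (Submodule.span ℝ (Set.range B) : Set E) := by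
          ext x
          simp [hS2', hB, linearIndependent_fin_cons]
        show volume (Prod.mk B ⁻¹' S2') = 0
        rw [hset]
        refine Measure.addHaar_submodule volume _ ?_
        intro htop
        have h1 := finrank_span_le_card (R := ℝ) (Set.range B)
        rw [htop, finrank_top] at h1
        have h2 : (Set.range B).toFinset.card ≤ n := by
          rw [Set.toFinset_card]
          simpa using Fintype.card_range_le B
        have h3 : Module.finrank ℝ E = d := Module.finrank_fin_fun ℝ
        omega
      · have hset : Prod.mk B ⁻¹' S2' = ∅ := by
          ext x; simp [hS2', hB]
        show volume (Prod.mk B ⁻¹' S2') = 0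
        simp [hset]
    have hS2null : (volume.prod volume) S2 = 0 := by
      have hswap : S2 = Prod.swap ⁻¹' S2' := rfl
      rw [hswap, ← Measure.map_apply measurable_swap hS2'm, Measure.prod_swap]
      exact hS2'null
    have hSnull : (volume.prod volume) S = 0 := by
      refine le_antisymm ?_ zero_le
      calc (volume.prod volume) S ≤ (volume.prod volume) (S1 ∪ S2) := measure_mono hsplit
        _ ≤ (volume.prod volume) S1 + (volume.prod volume) S2 := measure_union_le _ _
        _ = 0 := by rw [hS1null, hS2null, add_zero]
    have hvol1 : (Measure.pi fun _ : Fin (n+1) => (volume : Measure E)) = volume :=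
      volume_pi.symm
    have hvol2 : (Measure.pi fun _ : Fin n => (volume : Measure E)) = volume :=
      volume_pi.symm
    rw [hvol1, hvol2] at mp
    have hpre : {v : Fin (n+1) → E | ¬ LinearIndependent ℝ v} = e ⁻¹' S := by
      ext v
      have hv : Fin.cons ((e v).1) ((e v).2) = v := by
        have h1 : (e v).1 = v 0 := rfl
        have h2 : (e v).2 = fun j => v ((0 : Fin (n+1)).succAbove j) := rfl
        funext j
        induction j using Fin.cases with
        | zero => rw [Fin.cons_zero, h1]
        | succ i => rw [Fin.cons_succ, h2]; simp [Fin.zero_succAbove]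
      simp only [Set.mem_preimage, hS, Set.mem_setOf_eq]
      rw [hv]
    rw [hpre, mp.measure_preimage hSm.nullMeasurableSet]
    exact hSnull

lemma conv_null (n d : ℕ) (hnd : n ≤ d) (p : Fin d → ℝ) :
    volume {A : Fin n → (Fin d → ℝ) | p ∈ convexHull ℝ (Set.range A)} = 0 := by
  set c : Fin n → (Fin d → ℝ) := fun _ => -p with hc
  have hsub : {A : Fin n → (Fin d → ℝ) | p ∈ convexHull ℝ (Set.range A)} ⊆
      (fun A => c + A) ⁻¹' {v : Fin n → (Fin d → ℝ) | ¬ LinearIndependent ℝ v} := by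
    intro A hA
    simp only [Set.mem_preimage, Set.mem_setOf_eq]
    intro hind
    have hp : p ∈ affineSpan ℝ (Set.range A) := convexHull_subset_affineSpan _ hA
    obtain ⟨w, hw, hpw⟩ := eq_affineCombination_of_mem_affineSpan_of_fintype hp
    have hpsum : p = ∑ i, w i • A i := by
      rw [hpw, Finset.affineCombination_eq_linear_combination _ _ _ hw]
    have hzero : ∑ i, w i • ((c + A) i) = 0 := by
      have hterm : ∀ i : Fin n, w i • ((c + A) i) = w i • A i - w i • p := by
        intro i
        have : (c + A) i = A i - p := by simp [hc, sub_eq_neg_add]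
        rw [this, smul_sub]
      calc ∑ i, w i • ((c + A) i) = ∑ i, (w i • A i - w i • p) :=
            Finset.sum_congr rfl fun i _ => hterm i
        _ = (∑ i, w i • A i) - (∑ i, w i) • p := by
            rw [Finset.sum_sub_distrib, Finset.sum_smul]
        _ = 0 := by rw [hw, one_smul, ← hpsum, sub_self]
    have hzero' := Fintype.linearIndependent_iff.mp hind w hzero
    rw [Finset.sum_eq_zero (fun i _ => hzero' i)] at hw
    exact zero_ne_one hw
  refine le_antisymm ?_ zero_le
  calc volume {A : Fin n → (Fin d → ℝ) | p ∈ convexHull ℝ (Set.range A)}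
      ≤ volume ((fun A => c + A) ⁻¹' {v : Fin n → (Fin d → ℝ) | ¬ LinearIndependent ℝ v}) :=
        measure_mono hsub
    _ = volume {v : Fin n → (Fin d → ℝ) | ¬ LinearIndependent ℝ v} :=
        measure_preimage_add volume c _
    _ = 0 := dep_null n d hnd

/-- For `1 ≤ k < d` and `S = [0,1]ᵈ \ ℚᵈ`, the `k`-simplex set has full
measure in `S^{k+1}`; since `λ(S) = 1`, the `k`-index of convexity equals `1`. -/
theorem hull_k_full_measure (d k : ℕ) (hk : 1 ≤ k) (hkd : k < d) :
    volume {A : Fin (k + 1) → (Fin d → ℝ) |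
      (∀ i, A i ∈ Set.Icc (0 : Fin d → ℝ) 1 \ {x | ∀ j, ∃ q : ℚ, x j = (q : ℝ)}) ∧
      convexHull ℝ (Set.range A) ⊆
        Set.Icc (0 : Fin d → ℝ) 1 \ {x | ∀ j, ∃ q : ℚ, x j = (q : ℝ)}} = 1 := by
  set Q : Set (Fin d → ℝ) := {x | ∀ j, ∃ q : ℚ, x j = (q : ℝ)} with hQdef
  set G := {A : Fin (k+1) → (Fin d → ℝ) | (∀ i, A i ∈ Set.Icc (0:Fin d → ℝ) 1 \ Q) ∧
      convexHull ℝ (Set.range A) ⊆ Set.Icc (0:Fin d → ℝ) 1 \ Q} with hG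
  set Box := {A : Fin (k+1) → (Fin d → ℝ) | ∀ i, A i ∈ Set.Icc (0:Fin d → ℝ) 1} with hBox
  have hQc : Q.Countable := by
    have hsub : Q ⊆ Set.range (fun f : Fin d → ℚ => (fun j => (f j : ℝ))) := by
      intro x hx
      refine ⟨fun j => (hx j).choose, ?_⟩
      funext j
      exact ((hx j).choose_spec).symm
    exact (Set.countable_range _).mono hsub
  set N := ⋃ p ∈ Q, {A : Fin (k+1) → (Fin d → ℝ) | p ∈ convexHull ℝ (Set.range A)} with hN
  have hNnull : volume N = 0 :=
    (measure_biUnion_null_iff hQc).2 fun p _ => conv_null (k+1) d (by omega) p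
  have hBoxvol : volume Box = 1 := by
    have hpi : Box = Set.pi Set.univ (fun _ : Fin (k+1) => Set.Icc (0:Fin d → ℝ) 1) := by
      ext A; simp [hBox, Set.mem_pi, Pi.le_def, forall_and]
    rw [hpi, volume_pi_pi]
    have hIcc : volume (Set.Icc (0:Fin d → ℝ) 1) = 1 := by
      rw [Real.volume_Icc_pi]
      simp
    simp [hIcc]
  have hGB : G ⊆ Box := fun A hA i => (hA.1 i).1
  have hBGN : Box ⊆ G ∪ N := by
    intro A hA
    by_cases hAN : A ∈ N
    · exact Or.inr hAN
    · left
      have hhull : convexHull ℝ (Set.range A) ⊆ Set.Icc (0:Fin d → ℝ) 1 :=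
        convexHull_min (by rintro y ⟨i, rfl⟩; exact hA i) (convex_Icc _ _)
      have hnoQ : ∀ x ∈ convexHull ℝ (Set.range A), x ∉ Q := by
        intro x hx hxQ
        exact hAN (Set.mem_biUnion hxQ hx)
      constructor
      · intro i
        exact ⟨hA i, hnoQ _ (subset_convexHull ℝ _ (Set.mem_range_self i))⟩
      · intro x hx
        exact ⟨hhull hx, hnoQ x hx⟩
  refine le_antisymm ?_ ?_
  · calc volume G ≤ volume Box := measure_mono hGB
      _ = 1 := hBoxvol
  · calc (1:ENNReal) = volume Box := hBoxvol.symm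
      _ ≤ volume (G ∪ N) := measure_mono hBGN
      _ ≤ volume G + volume N := measure_union_le _ _
      _ = volume G := by rw [hNnull, add_zero]
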